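/- Let (T,β) be a tree decomposition of a graph G, and let U ⊆ V(G) be such that G[U] is connected. Then for every node t ∈ V(T), either the induced subgraph tor(t)[U ∩ β(t)] of the torso of t is connected, or every connected component of tor(t)[U ∩ β(t)] contains a vertex of the adhesion σ(t). -/

import Mathlib

/-- A rooted tree decomposition of a graph `G`.  The rooted tree on the index type `ι` is
given by a parent function together with a root which every node reaches by iterating
`parent`.  The bags satisfy the usual covering, edge and (subtree-)connectivity axioms;
the connectivity axiom is phrased for rooted trees: if `v` lies in the bag of `t` but not
in the bag of its parent (and `t` is not the root), then every node whose bag contains `v`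
is a descendant of `t`. -/
structure RootedTreeDecomp (V : Type*) (ι : Type*) (G : SimpleGraph V) where
  parent : ι → ι
  root : ι
  parent_root : parent root = root
  reaches_root : ∀ t : ι, ∃ n : ℕ, parent^[n] t = root
  bag : ι → Set V
  bag_cover : ∀ v : V, ∃ t : ι, v ∈ bag t
  bag_edge : ∀ ⦃u v : V⦄, G.Adj u v → ∃ t : ι, u ∈ bag t ∧ v ∈ bag t
  bag_conn : ∀ (v : V) (t : ι), v ∈ bag t → t ≠ root → v ∉ bag (parent t) →
      ∀ s : ι, v ∈ bag s → ∃ n : ℕ, parent^[n] s = t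

namespace RootedTreeDecomp

variable {V ι : Type*} {G : SimpleGraph V}

open Classical

/-- The adhesion `σ(t) = β(t) ∩ β(parent t)`, with `σ(root) = ∅`. -/
noncomputable def adhesion (D : RootedTreeDecomp V ι G) (t : ι) : Set V :=
  if t = D.root then ∅ else D.bag t ∩ D.bag (D.parent t)

/-- `s` is a child of `t` in the rooted tree. -/
def IsChild (D : RootedTreeDecomp V ι G) (s t : ι) : Prop :=
  s ≠ D.root ∧ D.parent s = t

/-- The set `γ(t)`: the union of the bags over the subtree rooted at `t`. -/
def subtreeBags (D : RootedTreeDecomp V ι G) (t : ι) : Set V :=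
  ⋃ s ∈ {s : ι | ∃ n : ℕ, D.parent^[n] s = t}, D.bag s

/-- The torso of a node `t`: the graph on the bag `β(t)` (as a graph with vertex set `V`,
with all edges inside `β(t)`) obtained from `G[β(t)]` by making the adhesion `σ(s)` of every
child `s` of `t` into a clique. -/
def torso (D : RootedTreeDecomp V ι G) (t : ι) : SimpleGraph V where
  Adj u v := u ≠ v ∧ u ∈ D.bag t ∧ v ∈ D.bag t ∧
    (G.Adj u v ∨ ∃ s : ι, D.IsChild s t ∧ u ∈ D.adhesion s ∧ v ∈ D.adhesion s)
  symm := by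
    constructor
    rintro u v ⟨hne, hu, hv, h⟩
    refine ⟨hne.symm, hv, hu, ?_⟩
    rcases h with h | ⟨s, hs, h1, h2⟩
    · exact Or.inl h.symm
    · exact Or.inr ⟨s, hs, h2, h1⟩
  loopless := ⟨fun u h => h.1 rfl⟩

end RootedTreeDecomp


namespace RootedTreeDecomp

variable {V ι : Type*} {G : SimpleGraph V} (D : RootedTreeDecomp V ι G)

/-- descendant relation: `a` is a descendant of `b`. -/
def Desc (a b : ι) : Prop := ∃ n, D.parent^[n] a = b

lemma desc_refl (a : ι) : D.Desc a a := ⟨0, rfl⟩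

lemma desc_trans {a b c : ι} (h1 : D.Desc a b) (h2 : D.Desc b c) : D.Desc a c := by
  obtain ⟨m, hm⟩ := h1; obtain ⟨n, hn⟩ := h2
  exact ⟨n + m, by rw [Function.iterate_add_apply, hm, hn]⟩

lemma iterate_root (n : ℕ) : D.parent^[n] D.root = D.root := by
  induction n with
  | zero => rfl
  | succ n ih => rw [Function.iterate_succ_apply', ih, D.parent_root]

lemma eq_root_of_cycle {w : ι} {n : ℕ} (h : D.parent^[n] w = w) (hn : n ≠ 0) :
    w = D.root := by
  obtain ⟨k, hk⟩ := D.reaches_root w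
  have hcyc : ∀ j, D.parent^[j * n] w = w := by
    intro j
    induction j with
    | zero => simp
    | succ j ih => rw [Nat.succ_mul, Function.iterate_add_apply, h, ih]
  have hkn : k ≤ k * n := Nat.le_mul_of_pos_right k (Nat.pos_of_ne_zero hn)
  calc w = D.parent^[k * n] w := (hcyc k).symm
    _ = D.parent^[k * n - k] (D.parent^[k] w) := by
        rw [← Function.iterate_add_apply, Nat.sub_add_cancel hkn]
    _ = D.root := by rw [hk, D.iterate_root]

lemma desc_antisymm {a b : ι} (h1 : D.Desc a b) (h2 : D.Desc b a) : a = b := by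
  obtain ⟨m, hm⟩ := h1; obtain ⟨n, hn⟩ := h2
  have h : D.parent^[n + m] a = a := by rw [Function.iterate_add_apply, hm, hn]
  rcases Nat.eq_zero_or_pos (n + m) with h0 | h0
  · have hm0 : m = 0 := by omega
    rw [hm0] at hm
    simpa using hm
  · have ha : a = D.root := D.eq_root_of_cycle h (by omega)
    subst ha
    rw [← hm, D.iterate_root]

lemma bag_parent_of {v : V} {r : ι} {n : ℕ} (h1 : v ∈ D.bag r)
    (h2 : v ∈ D.bag (D.parent^[n] r)) (hn : n ≠ 0) : v ∈ D.bag (D.parent r) := by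
  by_cases hp : v ∈ D.bag (D.parent r)
  · exact hp
  exfalso
  by_cases hr : r = D.root
  · subst hr; rw [D.parent_root] at hp; exact hp h1
  · have hconn := D.bag_conn v r h1 hr hp
    have hd1 : D.Desc (D.parent^[n] r) r := hconn _ h2
    have heq : D.parent^[n] r = r := D.desc_antisymm hd1 ⟨n, rfl⟩
    exact hr (D.eq_root_of_cycle heq hn)

lemma bag_interp {v : V} {r : ι} {n : ℕ} (h1 : v ∈ D.bag r)
    (h2 : v ∈ D.bag (D.parent^[n] r)) : ∀ i ≤ n, v ∈ D.bag (D.parent^[i] r) := by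
  induction n generalizing r with
  | zero =>
      intro i hi
      simpa [show i = 0 by omega] using h1
  | succ n ih =>
      intro i hi
      have hpar : v ∈ D.bag (D.parent r) := D.bag_parent_of h1 h2 (by omega)
      cases i with
      | zero => exact h1
      | succ i =>
          rw [Function.iterate_succ_apply]
          exact ih hpar (by rw [← Function.iterate_succ_apply]; exact h2) i (by omega)

lemma exists_top {v : V} {t0 : ι} (h : v ∈ D.bag t0) :
    ∃ u, v ∈ D.bag u ∧ D.Desc t0 u ∧ ∀ s, v ∈ D.bag s → D.Desc s u := by
  obtain ⟨n, hn⟩ := D.reaches_root t0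
  induction n generalizing t0 with
  | zero =>
      exact ⟨t0, h, D.desc_refl t0, fun s _ => by
        rw [show t0 = D.root from hn]; exact D.reaches_root s⟩
  | succ n ih =>
      by_cases h0 : t0 = D.root
      · exact ⟨t0, h, D.desc_refl t0, fun s _ => by rw [h0]; exact D.reaches_root s⟩
      by_cases hp : v ∈ D.bag (D.parent t0)
      · obtain ⟨u, hu1, hu2, hu3⟩ := ih hp (by rw [← Function.iterate_succ_apply]; exact hn)
        exact ⟨u, hu1, D.desc_trans ⟨1, rfl⟩ hu2, hu3⟩
      · exact ⟨t0, h, D.desc_refl t0, fun s hs => D.bag_conn v t0 h h0 hp s hs⟩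

lemma factM {v : V} {r r' s : ι} (h1 : v ∈ D.bag r) (hd : D.Desc r s)
    (h2 : v ∈ D.bag r') (hnd : ¬ D.Desc r' s) : v ∈ D.bag s := by
  obtain ⟨u, hu, hru, htop⟩ := D.exists_top h1
  have hr'u : D.Desc r' u := htop r' h2
  obtain ⟨m, hm⟩ := hd
  obtain ⟨n, hn⟩ := hru
  rcases le_total n m with hle | hle
  · exfalso
    apply hnd
    refine D.desc_trans hr'u ⟨m - n, ?_⟩
    rw [← hn, ← Function.iterate_add_apply, Nat.sub_add_cancel hle, hm]
  · have := D.bag_interp h1 (by rw [hn]; exact hu) m hle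
    rwa [hm] at this

lemma factM' {v : V} {t r : ι} (h1 : v ∈ D.bag t) (h2 : v ∈ D.bag r)
    (hnd : ¬ D.Desc r t) : v ∈ D.bag (D.parent t) := by
  obtain ⟨u, hu, ⟨n, hn⟩, htop⟩ := D.exists_top h1
  have hne : n ≠ 0 := by
    rintro rfl
    have hut : u = t := by simpa using hn.symm
    exact hnd (hut ▸ htop r h2)
  have := D.bag_interp h1 (by rw [hn]; exact hu) 1 (by omega)
  rwa [Function.iterate_one] at this

/-- vertices all of whose bags lie in the subtree of `s`. -/
def Below (s : ι) : Set V := {w | ∀ r, w ∈ D.bag r → D.Desc r s}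

/-- vertices none of whose bags lie in the subtree of `t`. -/
def Up (t : ι) : Set V := {w | ∀ r, w ∈ D.bag r → ¬ D.Desc r t}

lemma not_desc_parent {s t : ι} (hs : D.IsChild s t) : ¬ D.Desc t s := by
  rintro ⟨m, hm⟩
  apply hs.1
  refine D.eq_root_of_cycle (n := m + 1) ?_ (by omega)
  rw [Function.iterate_add_apply, Function.iterate_one, hs.2, hm]

lemma below_notin_bag {s t : ι} {w : V} (hs : D.IsChild s t) (hw : w ∈ D.Below s) :
    w ∉ D.bag t := fun h => D.not_desc_parent hs (hw t h)

lemma up_notin_bag {t : ι} {w : V} (hw : w ∈ D.Up t) : w ∉ D.bag t :=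
  fun h => hw t h (D.desc_refl t)

lemma mem_below_or_up {t : ι} {w : V} (hw : w ∉ D.bag t) :
    (∃ s, D.IsChild s t ∧ w ∈ D.Below s) ∨ w ∈ D.Up t := by
  classical
  by_cases hex : ∃ r, w ∈ D.bag r ∧ D.Desc r t
  · left
    obtain ⟨r, hwr, hd⟩ := hex
    have hP : ∃ k, D.parent^[k] r = t := hd
    let m := Nat.find hP
    have hm : D.parent^[m] r = t := Nat.find_spec hP
    have hm0 : m ≠ 0 := by
      intro h0
      apply hw
      rw [← hm, h0]; exact hwr
    set s := D.parent^[m - 1] r with hsdef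
    have hps : D.parent s = t := by
      have h' : D.parent (D.parent^[m - 1] r) = D.parent^[m - 1 + 1] r :=
        (Function.iterate_succ_apply' D.parent (m - 1) r).symm
      rw [hsdef, h', Nat.sub_add_cancel (Nat.pos_of_ne_zero hm0), hm]
    have hsne : s ≠ D.root := by
      intro h0
      have : D.parent^[m - 1] r = t := by
        rw [← hps, h0, D.parent_root, ← h0]
      exact Nat.find_min hP (by omega) this
    have hchild : D.IsChild s t := ⟨hsne, hps⟩
    refine ⟨s, hchild, fun r' hr' => ?_⟩
    by_contra hnd
    have hws : w ∈ D.bag s := D.factM hwr ⟨m - 1, rfl⟩ hr' hnd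
    have : w ∈ D.bag (D.parent s) := D.factM' hws hr' hnd
    rw [hps] at this
    exact hw this
  · right
    intro r hr hd
    exact hex ⟨r, hr, hd⟩

lemma below_adj_bag {s t : ι} {u v : V} (hs : D.IsChild s t) (hu : u ∈ D.Below s)
    (h : G.Adj u v) (hv : v ∈ D.bag t) : v ∈ D.bag s := by
  obtain ⟨r, hur, hvr⟩ := D.bag_edge h
  exact D.factM hvr (hu r hur) hv (D.not_desc_parent hs)

lemma below_adj_notbag {s t : ι} {u v : V} (hs : D.IsChild s t) (hu : u ∈ D.Below s)
    (h : G.Adj u v) (hv : v ∉ D.bag t) : v ∈ D.Below s := by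
  obtain ⟨r, hur, hvr⟩ := D.bag_edge h
  intro r' hr'
  by_contra hnd
  have hvs : v ∈ D.bag s := D.factM hvr (hu r hur) hr' hnd
  have := D.factM' hvs hr' hnd
  rw [hs.2] at this
  exact hv this

lemma up_adj_bag {t : ι} {u v : V} (hu : u ∈ D.Up t) (h : G.Adj u v)
    (hv : v ∈ D.bag t) : v ∈ D.bag (D.parent t) ∧ t ≠ D.root := by
  obtain ⟨r, hur, hvr⟩ := D.bag_edge h
  have hnd : ¬ D.Desc r t := hu r hur
  refine ⟨D.factM' hv hvr hnd, ?_⟩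
  rintro rfl
  exact hnd (D.reaches_root r)

lemma up_adj_notbag {t : ι} {u v : V} (hu : u ∈ D.Up t) (h : G.Adj u v)
    (hv : v ∉ D.bag t) : v ∈ D.Up t := by
  obtain ⟨r, hur, hvr⟩ := D.bag_edge h
  intro r' hr' hd
  exact hv (D.factM hr' hd hvr (hu r hur))

end RootedTreeDecomp

namespace RootedTreeDecomp

variable {V ι : Type*} {G : SimpleGraph V} (D : RootedTreeDecomp V ι G) (U : Set V) (t : ι)

/-- "reaches the adhesion" inside the induced torso graph. -/
def RSp (x : ↥(U ∩ D.bag t)) : Prop :=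
  ∃ y : ↥(U ∩ D.bag t),
    ((D.torso t).induce (U ∩ D.bag t)).Reachable x y ∧ (y : V) ∈ D.adhesion t

/-- either reachable, or both reach the adhesion. -/
def RRp (x z : ↥(U ∩ D.bag t)) : Prop :=
  ((D.torso t).induce (U ∩ D.bag t)).Reachable x z ∨ (D.RSp U t x ∧ D.RSp U t z)

variable {D U t}

lemma rsp_of_reach {x z : ↥(U ∩ D.bag t)}
    (h : ((D.torso t).induce (U ∩ D.bag t)).Reachable x z) (hz : D.RSp U t z) :
    D.RSp U t x := by
  obtain ⟨y, hy, hadh⟩ := hz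
  exact ⟨y, h.trans hy, hadh⟩

lemma rrp_trans_reach {x y z : ↥(U ∩ D.bag t)}
    (h : ((D.torso t).induce (U ∩ D.bag t)).Reachable x y) (h2 : D.RRp U t y z) :
    D.RRp U t x z := by
  rcases h2 with h2 | ⟨hy, hz⟩
  · exact Or.inl (h.trans h2)
  · exact Or.inr ⟨rsp_of_reach h hy, hz⟩

lemma rrp_symm {x z : ↥(U ∩ D.bag t)} (h : D.RRp U t x z) : D.RRp U t z x := by
  rcases h with h | ⟨h1, h2⟩
  · exact Or.inl h.symm
  · exact Or.inr ⟨h2, h1⟩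

lemma rsp_of_rrp_rsp {x z : ↥(U ∩ D.bag t)} (h : D.RRp U t x z) (hz : D.RSp U t z) :
    D.RSp U t x := by
  rcases h with h | ⟨hx, _⟩
  · exact rsp_of_reach h hz
  · exact hx

lemma mem_adhesion_of {s : ι} (hs : D.IsChild s t) {v : V} (h1 : v ∈ D.bag s)
    (h2 : v ∈ D.bag t) : v ∈ D.adhesion s := by
  rw [adhesion, if_neg hs.1, hs.2]
  exact ⟨h1, h2⟩

lemma reach_of_adhesion {s : ι} (hs : D.IsChild s t) (x z : ↥(U ∩ D.bag t))
    (hx : (x : V) ∈ D.bag s) (hz : (z : V) ∈ D.bag s) :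
    ((D.torso t).induce (U ∩ D.bag t)).Reachable x z := by
  by_cases hxz : x = z
  · subst hxz; exact SimpleGraph.Reachable.refl x
  refine SimpleGraph.Adj.reachable ?_
  show (D.torso t).Adj x z
  exact ⟨fun h => hxz (Subtype.ext h), x.2.2, z.2.2,
    Or.inr ⟨s, hs, D.mem_adhesion_of hs hx x.2.2, D.mem_adhesion_of hs hz z.2.2⟩⟩

lemma reach_of_Gadj (x z : ↥(U ∩ D.bag t)) (h : G.Adj x z) :
    ((D.torso t).induce (U ∩ D.bag t)).Reachable x z := by
  refine SimpleGraph.Adj.reachable ?_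
  show (D.torso t).Adj x z
  exact ⟨h.ne, x.2.2, z.2.2, Or.inl h⟩

lemma walk_cases {a b : ↥U} (p : (G.induce U).Walk a b) :
    (∀ (ha : (a : V) ∈ D.bag t) (hb : (b : V) ∈ D.bag t),
       D.RRp U t ⟨a, a.2, ha⟩ ⟨b, b.2, hb⟩) ∧
    (∀ s, D.IsChild s t → (a : V) ∈ D.Below s → ∀ (hb : (b : V) ∈ D.bag t),
       ∃ c : ↥(U ∩ D.bag t), (c : V) ∈ D.bag s ∧ D.RRp U t c ⟨b, b.2, hb⟩) ∧
    ((a : V) ∈ D.Up t → ∀ (hb : (b : V) ∈ D.bag t),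
       ∃ c : ↥(U ∩ D.bag t), (c : V) ∈ D.adhesion t ∧ D.RRp U t c ⟨b, b.2, hb⟩) := by
  induction p with
  | nil =>
      refine ⟨fun ha hb => Or.inl (SimpleGraph.Reachable.refl _), ?_, ?_⟩
      · intro s hs hbel hb
        exact absurd hb (D.below_notin_bag hs hbel)
      · intro hup hb
        exact absurd hb (D.up_notin_bag hup)
  | @cons a a' b h q ih =>
      have hadj : G.Adj (a : V) (a' : V) := by simpa using h
      refine ⟨?_, ?_, ?_⟩
      · intro ha hb
        by_cases ha' : (a' : V) ∈ D.bag t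
        · exact rrp_trans_reach
            (reach_of_Gadj (D := D) (U := U) (t := t) ⟨a, a.2, ha⟩ ⟨a', a'.2, ha'⟩ hadj)
            (ih.1 ha' hb)
        · rcases D.mem_below_or_up ha' with ⟨s, hs, hbel⟩ | hup
          · have haσ : (a : V) ∈ D.bag s := D.below_adj_bag hs hbel hadj.symm ha
            obtain ⟨c, hcs, hrr⟩ := ih.2.1 s hs hbel hb
            exact rrp_trans_reach (reach_of_adhesion (U := U) hs ⟨a, a.2, ha⟩ c haσ hcs) hrr
          · obtain ⟨hpar, hroot⟩ := D.up_adj_bag hup hadj.symm ha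
            obtain ⟨c, hcadh, hrr⟩ := ih.2.2 hup hb
            have hrsa : D.RSp U t ⟨a, a.2, ha⟩ := by
              refine ⟨⟨a, a.2, ha⟩, SimpleGraph.Reachable.refl _, ?_⟩
              rw [adhesion, if_neg hroot]
              exact ⟨ha, hpar⟩
            have hrsc : D.RSp U t c := ⟨c, SimpleGraph.Reachable.refl _, hcadh⟩
            exact Or.inr ⟨hrsa, rsp_of_rrp_rsp (rrp_symm hrr) hrsc⟩
      · intro s hs hbel hb
        by_cases ha' : (a' : V) ∈ D.bag t
        · have hc : (a' : V) ∈ D.bag s := D.below_adj_bag hs hbel hadj ha'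
          exact ⟨⟨a', a'.2, ha'⟩, hc, ih.1 ha' hb⟩
        · exact ih.2.1 s hs (D.below_adj_notbag hs hbel hadj ha') hb
      · intro hup hb
        by_cases ha' : (a' : V) ∈ D.bag t
        · obtain ⟨hpar, hroot⟩ := D.up_adj_bag hup hadj ha'
          refine ⟨⟨a', a'.2, ha'⟩, ?_, ih.1 ha' hb⟩
          rw [adhesion, if_neg hroot]
          exact ⟨ha', hpar⟩
        · exact ih.2.2 (D.up_adj_notbag hup hadj ha') hb

end RootedTreeDecomp

/-- Let `(T,β)` be a tree decomposition of `G` and `U ⊆ V(G)` with `G[U]`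
connected.  Then for every node `t`, either the induced subgraph `tor(t)[U ∩ β(t)]` of the
torso of `t` is connected, or every connected component of `tor(t)[U ∩ β(t)]` contains a
vertex of the adhesion `σ(t)` (i.e. every vertex of `U ∩ β(t)` can reach, inside
`tor(t)[U ∩ β(t)]`, a vertex of `σ(t)`). -/
theorem torso_restriction_connected_or_components_meet_adhesion
    {V ι : Type*} {G : SimpleGraph V} (D : RootedTreeDecomp V ι G)
    (U : Set V) (hU : (G.induce U).Connected) (t : ι) :
    ((D.torso t).induce (U ∩ D.bag t)).Connected ∨
      ∀ x : ↥(U ∩ D.bag t), ∃ y : ↥(U ∩ D.bag t),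
        ((D.torso t).induce (U ∩ D.bag t)).Reachable x y ∧ (y : V) ∈ D.adhesion t := by
  classical
  by_cases hc : ((D.torso t).induce (U ∩ D.bag t)).Connected
  · exact Or.inl hc
  right
  intro x
  have main : ∀ p q : ↥(U ∩ D.bag t), D.RRp U t p q := by
    intro p q
    obtain ⟨w⟩ := hU.preconnected ⟨p, p.2.1⟩ ⟨q, q.2.1⟩
    have h := (D.walk_cases (t := t) w).1 p.2.2 q.2.2
    exact h
  have hne : Nonempty ↥(U ∩ D.bag t) := ⟨x⟩
  have hpre : ¬ ((D.torso t).induce (U ∩ D.bag t)).Preconnected := by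
    intro h
    exact hc (SimpleGraph.Connected.mk h)
  rw [SimpleGraph.Preconnected] at hpre
  push_neg at hpre
  obtain ⟨u, v, huv⟩ := hpre
  have hsv : D.RSp U t u ∧ D.RSp U t v := ((main u v).resolve_left huv)
  exact RootedTreeDecomp.rsp_of_rrp_rsp (main x u) hsv.1
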